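/- The kernel K(x, y) = 1 − |x − y| on [0,1] is universal: the span of {K(y, ·) : y ∈ Z} is dense in C(Z) with respect to the sup norm, for every compact Z ⊆ [0,1]. -/

import Mathlib

open Finset

lemma interp_aux (n : ℕ) (Y V : ℕ → ℝ) (hm : ∀ k < n, Y k < Y (k+1))
    (hspan : Y n - Y 0 < 2) :
    ∃ c : ℕ → ℝ, ∀ j ≤ n, ∑ i ∈ range (n+1), c i * (1 - |Y i - Y j|) = V j := by
  have hden : (2 : ℝ) - (Y n - Y 0) ≠ 0 := by linarith
  set S : ℝ := (V 0 + V n) / (2 - (Y n - Y 0)) with hS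
  set σ : ℕ → ℝ := fun k =>
    if k = 0 then S else if k ≤ n then (V k - V (k-1)) / (Y k - Y (k-1)) else -S with hσ
  set c : ℕ → ℝ := fun k => (σ k - σ (k+1)) / 2 with hc
  have hmono : ∀ i j, i ≤ j → j ≤ n → Y i ≤ Y j := by
    intro i j hij hjn
    induction j with
    | zero => simp [Nat.le_zero.mp hij]
    | succ p ih =>
      rcases Nat.lt_succ_iff_lt_or_eq.mp (Nat.lt_succ_of_le hij) with h1 | h1
      · exact le_trans (ih (Nat.lt_succ_iff.mp h1)
          (le_trans (Nat.le_succ p) hjn)) (le_of_lt (hm p (Nat.lt_of_succ_le hjn)))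
      · simp [h1]
  have hs0 : σ 0 = S := by simp [hσ]
  have hsn : σ (n+1) = -S := by simp [hσ]
  have hT1 : ∀ j, ∑ i ∈ range (j+1), c i = (σ 0 - σ (j+1)) / 2 := by
    intro j
    induction j with
    | zero => simp [hc]
    | succ p ih => rw [sum_range_succ, ih]; simp only [hc]; ring
  have hT2 : ∀ j, j ≤ n → ∑ i ∈ range (j+1), c i * Y i
      = (σ 0 * Y 0 + (V j - V 0) - σ (j+1) * Y j) / 2 := by
    intro j hj
    induction j with
    | zero => simp [hc]; ring
    | succ p ih =>
      have hpn : p ≤ n := le_trans (Nat.le_succ p) hj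
      rw [sum_range_succ, ih hpn]
      have h1 : Y p < Y (p+1) := hm p (Nat.lt_of_succ_le hj)
      have hne : Y (p+1) - Y p ≠ 0 := by linarith
      have hslope : σ (p+1) * (Y (p+1) - Y p) = V (p+1) - V p := by
        have : σ (p+1) = (V (p+1) - V p) / (Y (p+1) - Y p) := by
          simp [hσ, hj]
        rw [this]; field_simp
      simp only [hc]
      linear_combination hslope / 2
  refine ⟨c, ?_⟩
  intro j hj
  have hsplit : ∑ i ∈ range (n+1), c i * (1 - |Y i - Y j|)
      = ∑ i ∈ range (j+1), c i * (1 - |Y i - Y j|)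
        + ∑ i ∈ Ico (j+1) (n+1), c i * (1 - |Y i - Y j|) := by
    rw [range_eq_Ico, range_eq_Ico]
    exact (sum_Ico_consecutive (fun i => c i * (1 - |Y i - Y j|)) (Nat.zero_le (j+1)) (by omega : j+1 ≤ n+1)).symm
  have hL1 : ∑ i ∈ range (j+1), c i * (1 - |Y i - Y j|)
      = (∑ i ∈ range (j+1), c i) * (1 - Y j) + ∑ i ∈ range (j+1), c i * Y i := by
    rw [sum_mul, ← sum_add_distrib]
    refine sum_congr rfl fun i hi => ?_
    have hij : i ≤ j := Nat.lt_succ_iff.mp (mem_range.mp hi)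
    rw [abs_of_nonpos (by linarith [hmono i j hij hj] : Y i - Y j ≤ 0)]; ring
  have hL2 : ∑ i ∈ Ico (j+1) (n+1), c i * (1 - |Y i - Y j|)
      = (∑ i ∈ Ico (j+1) (n+1), c i) * (1 + Y j) - ∑ i ∈ Ico (j+1) (n+1), c i * Y i := by
    rw [sum_mul, ← sum_sub_distrib]
    refine sum_congr rfl fun i hi => ?_
    obtain ⟨h1, h2⟩ := mem_Ico.mp hi
    have : |Y i - Y j| = Y i - Y j :=
      abs_of_nonneg (by linarith [hmono j i (by omega) (by omega)])
    rw [this]; ring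
  have hIc1 : ∑ i ∈ Ico (j+1) (n+1), c i
      = (σ 0 - σ (n+1)) / 2 - (σ 0 - σ (j+1)) / 2 := by
    rw [sum_Ico_eq_sub _ (by omega : j+1 ≤ n+1), hT1 n, hT1 j]
  have hIc2 : ∑ i ∈ Ico (j+1) (n+1), c i * Y i
      = (σ 0 * Y 0 + (V n - V 0) - σ (n+1) * Y n) / 2
        - (σ 0 * Y 0 + (V j - V 0) - σ (j+1) * Y j) / 2 := by
    rw [sum_Ico_eq_sub _ (by omega : j+1 ≤ n+1), hT2 n le_rfl, hT2 j hj]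
  rw [hsplit, hL1, hL2, hIc1, hIc2, hT1 j, hT2 j hj, hs0, hsn]
  have hSval : S * (2 - (Y n - Y 0)) = V 0 + V n := by
    rw [hS]; field_simp
  linear_combination hSval / 2

open Finset

lemma abs_affine_combo {p a b z t : ℝ} (hp : p ≤ a ∨ b ≤ p) (ht0 : 0 ≤ t) (ht1 : t ≤ 1)
    (hab : a ≤ b) (hz : z = (1-t)*a + t*b) :
    |p - z| = (1-t)*|p - a| + t*|p - b| := by
  subst hz
  have haz : a ≤ (1-t)*a + t*b := by nlinarith
  have hzb : (1-t)*a + t*b ≤ b := by nlinarith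
  rcases hp with h | h
  · rw [abs_of_nonpos (by linarith), abs_of_nonpos (by linarith),
      abs_of_nonpos (by linarith)]
    ring
  · rw [abs_of_nonneg (by linarith), abs_of_nonneg (by linarith),
      abs_of_nonneg (by linarith)]
    ring

open Finset


lemma key_est {ε δ δ' M t X W za bz : ℝ} (hε : 0 < ε) (hδ0 : 0 < δ)
    (hδ'δ : δ' ≤ δ) (hδ'2 : δ' ≤ δ * ε / (4*M+4)) (hM0 : 0 ≤ M)
    (ht0 : 0 < t) (ht1 : t < 1) (hX0 : 0 ≤ X) (hW0 : 0 ≤ W)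
    (hX2M : X ≤ 2*M) (hW2M : W ≤ 2*M)
    (htb : t * (za + bz) = za)
    (hXδ : za < δ → X < ε/2) (hWδ : bz < δ → W < ε/2)
    (hza : 0 < za) (hbz : 0 < bz)
    (hnear : za < δ' ∨ bz < δ') :
    (1-t)*X + t*W < ε := by
  have ht1b : (1-t) * (za + bz) = bz := by linear_combination -htb
  rcases hnear with hna | hnb
  · have hXε : X < ε/2 := hXδ (by linarith)
    by_cases hcase : bz < δ
    · have hWε : W < ε/2 := hWδ hcase
      have e1 : (1-t)*X ≤ (1-t)*(ε/2) := mul_le_mul_of_nonneg_left (le_of_lt hXε) (by linarith)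
      have e2 : t*W ≤ t*(ε/2) := mul_le_mul_of_nonneg_left (le_of_lt hWε) (le_of_lt ht0)
      have e3 : (1-t)*(ε/2) + t*(ε/2) = ε/2 := by ring
      linarith
    · push_neg at hcase
      have hba : δ ≤ za + bz := by linarith
      have htδ : t * δ < δ' := by nlinarith
      have ht' : t < ε/(4*M+4) := by
        have h1 : t * δ < (ε/(4*M+4)) * δ := by
          calc t * δ < δ' := htδ
            _ ≤ δ * ε / (4*M+4) := hδ'2
            _ = (ε/(4*M+4)) * δ := by ring
        exact lt_of_mul_lt_mul_right h1 hδ0.le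
      have e2 : t*W < ε/2 := by
        have h1 : t*W ≤ t*(2*M) := mul_le_mul_of_nonneg_left hW2M (le_of_lt ht0)
        have h2 : t*(2*M) < (ε/(4*M+4))*(2*M+1) := by nlinarith
        have h3 : (ε/(4*M+4))*(2*M+1) ≤ ε/2 := by
          rw [div_mul_eq_mul_div, div_le_div_iff₀ (by positivity) (by norm_num)]
          nlinarith
        linarith
      have e1 : (1-t)*X ≤ X := by nlinarith
      linarith
  · have hWε : W < ε/2 := hWδ (by linarith)
    by_cases hcase : za < δ
    · have hXε : X < ε/2 := hXδ hcase
      have e1 : (1-t)*X ≤ (1-t)*(ε/2) := mul_le_mul_of_nonneg_left (le_of_lt hXε) (by linarith)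
      have e2 : t*W ≤ t*(ε/2) := mul_le_mul_of_nonneg_left (le_of_lt hWε) (le_of_lt ht0)
      have e3 : (1-t)*(ε/2) + t*(ε/2) = ε/2 := by ring
      linarith
    · push_neg at hcase
      have hba : δ ≤ za + bz := by linarith
      have htδ : (1-t) * δ < δ' := by nlinarith
      have ht' : (1-t) < ε/(4*M+4) := by
        have h1 : (1-t) * δ < (ε/(4*M+4)) * δ := by
          calc (1-t) * δ < δ' := htδ
            _ ≤ δ * ε / (4*M+4) := hδ'2
            _ = (ε/(4*M+4)) * δ := by ring
        exact lt_of_mul_lt_mul_right h1 hδ0.le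
      have e2 : (1-t)*X < ε/2 := by
        have h1 : (1-t)*X ≤ (1-t)*(2*M) := mul_le_mul_of_nonneg_left hX2M (by linarith)
        have h2 : (1-t)*(2*M) < (ε/(4*M+4))*(2*M+1) := by nlinarith
        have h3 : (ε/(4*M+4))*(2*M+1) ≤ ε/2 := by
          rw [div_mul_eq_mul_div, div_le_div_iff₀ (by positivity) (by norm_num)]
          nlinarith
        linarith
      have e1 : t*W ≤ W := by nlinarith
      linarith

theorem uniform_split_kernel_universal (Z : Set ℝ) (hZ : Z ⊆ Set.Icc (0:ℝ) 1)
    (hZc : IsCompact Z) (f : ℝ → ℝ) (hf : ContinuousOn f Z) (ε : ℝ) (hε : 0 < ε) :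
    ∃ (m : ℕ) (y : Fin m → ℝ) (c : Fin m → ℝ), (∀ i, y i ∈ Z) ∧
      ∀ z ∈ Z, |f z - ∑ i, c i * (1 - |y i - z|)| < ε := by
  rcases Set.eq_empty_or_nonempty Z with hne | hne
  · exact ⟨0, Fin.elim0, Fin.elim0, fun i => i.elim0, fun z hz => by simp [hne] at hz⟩
  obtain ⟨x0, hx0, hM'⟩ := hZc.exists_isMaxOn hne hf.abs
  set M := |f x0| with hMdef
  have hM : ∀ w ∈ Z, |f w| ≤ M := fun w hw => isMaxOn_iff.mp hM' w hw
  have hM0 : 0 ≤ M := abs_nonneg _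
  have huc := hZc.uniformContinuousOn_of_continuous hf
  obtain ⟨δ, hδ0, hδ⟩ := Metric.uniformContinuousOn_iff.mp huc (ε/2) (by linarith)
  set δ' := min δ (δ * ε / (4*M+4)) with hδ'def
  have hδ'0 : 0 < δ' := lt_min hδ0 (by positivity)
  have hδ'δ : δ' ≤ δ := min_le_left _ _
  have hδ'2 : δ' ≤ δ * ε / (4*M+4) := min_le_right _ _
  obtain ⟨N, hNZ, hNfin, hNcov⟩ := hZc.finite_cover_balls hδ'0
  obtain ⟨zmin, hzmin⟩ := hZc.exists_isLeast hne
  obtain ⟨zmax, hzmax⟩ := hZc.exists_isGreatest hne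
  classical
  set T : Finset ℝ := hNfin.toFinset ∪ {zmin, zmax} with hTdef
  have hminT : zmin ∈ T := by
    rw [hTdef, Finset.mem_union]; right; simp
  have hmaxT : zmax ∈ T := by
    rw [hTdef, Finset.mem_union]; right; simp
  have hTZ : ∀ t ∈ T, t ∈ Z := by
    intro t ht
    rw [hTdef, Finset.mem_union] at ht
    rcases ht with h | h
    · exact hNZ (hNfin.mem_toFinset.mp h)
    · simp only [Finset.mem_insert, Finset.mem_singleton] at h
      rcases h with rfl | rfl
      · exact hzmin.1
      · exact hzmax.1
  set m := T.card with hm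
  have hm0 : 0 < m := Finset.card_pos.mpr ⟨zmin, hminT⟩
  set e := T.orderIsoOfFin hm.symm with he
  set Y : ℕ → ℝ := fun k => if h : k < m then (e ⟨k, h⟩ : ℝ) else 0 with hY
  have hYT : ∀ k, k < m → Y k ∈ T := by
    intro k hk
    simp only [hY, dif_pos hk]
    exact (e ⟨k, hk⟩).2
  set n := m - 1 with hn
  have hn1 : n + 1 = m := by omega
  have hYmono : ∀ k, k < n → Y k < Y (k+1) := by
    intro k hk
    have h1 : k < m := by omega
    have h2 : k + 1 < m := by omega
    simp only [hY, dif_pos h1, dif_pos h2]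
    exact Subtype.coe_lt_coe.mpr (e.strictMono (Fin.mk_lt_mk.mpr (Nat.lt_succ_self k)))
  have hsurj : ∀ t ∈ T, ∃ k, k < m ∧ Y k = t := by
    intro t ht
    obtain ⟨i, hi⟩ := e.surjective ⟨t, ht⟩
    refine ⟨i, i.isLt, ?_⟩
    simp only [hY, dif_pos i.isLt]
    rw [show (⟨(i : ℕ), i.isLt⟩ : Fin m) = i from rfl, hi]
  have hspan : Y n - Y 0 < 2 := by
    have h0 := hZ (hTZ _ (hYT 0 (by omega)))
    have h1 := hZ (hTZ _ (hYT n (by omega)))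
    rw [Set.mem_Icc] at h0 h1
    linarith [h0.1, h1.2]
  obtain ⟨c, hc⟩ := interp_aux n Y (fun k => f (Y k)) hYmono hspan
  refine ⟨m, fun i => Y i, fun i => c i, fun i => hTZ _ (hYT i i.isLt), ?_⟩
  intro z hz
  rw [Fin.sum_univ_eq_sum_range (fun i => c i * (1 - |Y i - z|)) m]
  set g : ℝ → ℝ := fun w => ∑ i ∈ Finset.range m, c i * (1 - |Y i - w|) with hg
  have hgz : ∑ i ∈ Finset.range m, c i * (1 - |Y i - z|) = g z := rfl
  rw [hgz]
  have hgT : ∀ t ∈ T, g t = f t := by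
    intro t ht
    obtain ⟨k, hk, rfl⟩ := hsurj t ht
    have h := hc k (by omega)
    rw [hn1] at h
    exact h
  by_cases hzT : z ∈ T
  · rw [show g z = f z from hgT z hzT]
    simpa using hε
  · have hzmin' : zmin < z := lt_of_le_of_ne (hzmin.2 hz) (fun h => hzT (h ▸ hminT))
    have hzmax' : z < zmax := lt_of_le_of_ne (hzmax.2 hz) (fun h => hzT (h.symm ▸ hmaxT))
    set A := T.filter (· < z) with hA
    have hAne : A.Nonempty := ⟨zmin, Finset.mem_filter.mpr ⟨hminT, hzmin'⟩⟩
    set B := T.filter (z < ·) with hB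
    have hBne : B.Nonempty := ⟨zmax, Finset.mem_filter.mpr ⟨hmaxT, hzmax'⟩⟩
    set a := A.max' hAne with ha
    set b := B.min' hBne with hb
    have haT : a ∈ T := (Finset.mem_filter.mp (A.max'_mem hAne)).1
    have haz : a < z := (Finset.mem_filter.mp (A.max'_mem hAne)).2
    have hbT : b ∈ T := (Finset.mem_filter.mp (B.min'_mem hBne)).1
    have hzb : z < b := (Finset.mem_filter.mp (B.min'_mem hBne)).2
    have hab : a < b := lt_trans haz hzb
    have hsep : ∀ s ∈ T, s ≤ a ∨ b ≤ s := by
      intro s hs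
      rcases lt_trichotomy s z with h | h | h
      · exact Or.inl (A.le_max' s (Finset.mem_filter.mpr ⟨hs, h⟩))
      · exact absurd (h ▸ hs) hzT
      · exact Or.inr (B.min'_le s (Finset.mem_filter.mpr ⟨hs, h⟩))
    set t := (z - a)/(b - a) with htdef
    have ht0 : 0 < t := div_pos (by linarith) (by linarith)
    have ht1 : t < 1 := (div_lt_one (by linarith)).mpr (by linarith)
    have hba : b - a ≠ 0 := by linarith
    have hzrep : z = (1-t)*a + t*b := by
      rw [htdef]; field_simp; ring
    have hgaff : g z = (1-t) * g a + t * g b := by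
      simp only [hg, Finset.mul_sum, ← Finset.sum_add_distrib]
      refine Finset.sum_congr rfl fun i hi => ?_
      rw [abs_affine_combo (hsep _ (hYT i (Finset.mem_range.mp hi))) (le_of_lt ht0)
        (le_of_lt ht1) (le_of_lt hab) hzrep]
      ring
    rw [hgaff, hgT a haT, hgT b hbT]
    have haZ : a ∈ Z := hTZ a haT
    have hbZ : b ∈ Z := hTZ b hbT
    have hfz : |f z| ≤ M := hM z hz
    have hfa : |f a| ≤ M := hM a haZ
    have hfb : |f b| ≤ M := hM b hbZ
    set X := |f z - f a| with hX
    set W := |f z - f b| with hW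
    have hX0 : 0 ≤ X := abs_nonneg _
    have hW0 : 0 ≤ W := abs_nonneg _
    have hX2M : X ≤ 2*M := by
      calc X ≤ |f z| + |f a| := abs_sub _ _
        _ ≤ 2*M := by linarith
    have hW2M : W ≤ 2*M := by
      calc W ≤ |f z| + |f b| := abs_sub _ _
        _ ≤ 2*M := by linarith
    have hEbound : |f z - ((1-t)*f a + t*f b)| ≤ (1-t)*X + t*W := by
      have h1 : f z - ((1-t)*f a + t*f b) = (1-t)*(f z - f a) + t*(f z - f b) := by ring
      rw [h1]
      calc |(1-t)*(f z - f a) + t*(f z - f b)|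
          ≤ |(1-t)*(f z - f a)| + |t*(f z - f b)| := abs_add_le _ _
        _ = (1-t)*X + t*W := by
            rw [abs_mul, abs_mul, abs_of_nonneg (by linarith : (0:ℝ) ≤ 1-t),
              abs_of_nonneg (le_of_lt ht0)]
    -- net point near z
    obtain ⟨p, hpN, hp⟩ := Set.mem_iUnion₂.mp (hNcov hz)
    have hpT : p ∈ T := by
      rw [hTdef, Finset.mem_union]; left; exact hNfin.mem_toFinset.mpr hpN
    have hpz : |z - p| < δ' := by rw [← Real.dist_eq]; exact Metric.mem_ball.mp hp
    have hpne : p ≠ z := fun h => hzT (h ▸ hpT)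
    have hXδ : ∀ h : z - a < δ, X < ε/2 := by
      intro h
      have : dist z a < δ := by rw [Real.dist_eq, abs_of_nonneg (by linarith)]; exact h
      exact hδ z hz a haZ this
    have hWδ : ∀ h : b - z < δ, W < ε/2 := by
      intro h
      have : dist z b < δ := by rw [Real.dist_eq, abs_of_nonpos (by linarith)]; linarith
      exact hδ z hz b hbZ this
    have hnear : z - a < δ' ∨ b - z < δ' := by
      rcases lt_or_gt_of_ne hpne with h | h
      · left
        have : p ≤ a := (hsep p hpT).resolve_right (by intro hh; linarith)
        have := abs_lt.mp hpz
        linarith [this.2]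
      · right
        have : b ≤ p := (hsep p hpT).resolve_left (by intro hh; linarith)
        have := abs_lt.mp hpz
        linarith [this.1]
    have htb : t * (b - a) = z - a := by
      rw [htdef]; field_simp
    have ht1b : (1-t) * (b - a) = b - z := by linear_combination -htb
    have htb' : t * ((z - a) + (b - z)) = z - a := by linear_combination htb
    clear_value X W t b a B A g Y e n m T δ' M
    have key : (1-t)*X + t*W < ε :=
      key_est hε hδ0 hδ'δ hδ'2 hM0 ht0 ht1 hX0 hW0 hX2M hW2M htb'
        (fun h => hXδ h) (fun h => hWδ h) (by linarith) (by linarith) hnear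
    linarith [hEbound, key]
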